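/- In a commutative differential ring (A, d) over ℚ in which every radical differential ideal is the radical differential ideal generated by a finite set (Ritt–Noetherianity), every radical differential ideal I with I ≠ A is a finite intersection of prime differential ideals. -/

import Mathlib

section Aux

variable {A : Type*} [CommRing A] [Algebra ℚ A]

/-- The radical differential ideal generated by a set. -/
private def rdi (d : Derivation ℚ A A) (S : Set A) : Ideal A :=
  sInf {J : Ideal A | (J.IsRadical ∧ ∀ x ∈ J, d x ∈ J) ∧ S ⊆ (J : Set A)}

private lemma subset_rdi (d : Derivation ℚ A A) (S : Set A) : S ⊆ (rdi d S : Set A) := by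
  intro x hx
  exact Submodule.mem_sInf.2 fun J hJ => hJ.2 hx

private lemma rdi_le (d : Derivation ℚ A A) {S : Set A} {J : Ideal A}
    (h1 : J.IsRadical) (h2 : ∀ x ∈ J, d x ∈ J) (h3 : S ⊆ (J : Set A)) : rdi d S ≤ J :=
  sInf_le ⟨⟨h1, h2⟩, h3⟩

private lemma rdi_radical (d : Derivation ℚ A A) (S : Set A) : (rdi d S).IsRadical := by
  intro x hx
  refine Submodule.mem_sInf.2 fun J hJ => hJ.1.1 ?_
  exact Ideal.radical_mono (sInf_le hJ) hx

private lemma rdi_diff (d : Derivation ℚ A A) (S : Set A) : ∀ x ∈ rdi d S, d x ∈ rdi d S := by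
  intro x hx
  exact Submodule.mem_sInf.2 fun J hJ => hJ.1.2 x (Submodule.mem_sInf.1 hx J hJ)

/-- Key lemma: if `a * t ∈ I` for all `t ∈ T`, with `I` a radical differential ideal,
then `a * z ∈ I` for all `z` in the radical differential ideal generated by `T`. -/
private lemma key (d : Derivation ℚ A A) {I : Ideal A} (hrad : I.IsRadical)
    (hdiff : ∀ x ∈ I, d x ∈ I) {a : A} {T : Set A} (hT : ∀ t ∈ T, a * t ∈ I) :
    ∀ z ∈ rdi d T, a * z ∈ I := by
  set M : Ideal A := Submodule.colon I (Ideal.span {a}) with hM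
  have hMmem : ∀ z : A, z ∈ M ↔ a * z ∈ I := by
    intro z; rw [hM, Ideal.mem_colon_span_singleton, mul_comm]
  have hMrad : M.IsRadical := by
    intro z hz
    obtain ⟨n, hn⟩ := Ideal.mem_radical_iff.1 hz
    rw [hMmem] at *
    have h1 : (a * z) ^ (n + 1) ∈ I := by
      have he : (a * z) ^ (n + 1) = (a * z ^ n) * (a ^ n * z) := by ring
      rw [he]
      exact I.mul_mem_right _ hn
    exact hrad (Ideal.mem_radical_iff.2 ⟨n + 1, h1⟩)
  have hMdiff : ∀ z ∈ M, d z ∈ M := by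
    intro z hz
    rw [hMmem] at hz ⊢
    have h1 : d (a * z) ∈ I := hdiff _ hz
    have hl : d (a * z) = a * d z + z * d a := by
      rw [Derivation.leibniz, smul_eq_mul, smul_eq_mul]
    rw [hl] at h1
    have h2 : (a * d z) * (a * d z + z * d a) ∈ I := I.mul_mem_left _ h1
    have h3 : (a * d z) * (z * d a) ∈ I := by
      have he : (a * d z) * (z * d a) = (a * z) * (d z * d a) := by ring
      rw [he]
      exact I.mul_mem_right _ hz
    have h4 : (a * d z) ^ 2 ∈ I := by
      have he : (a * d z) ^ 2 = (a * d z) * (a * d z + z * d a) - (a * d z) * (z * d a) := by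
        ring
      rw [he]
      exact Ideal.sub_mem _ h2 h3
    exact hrad (Ideal.mem_radical_iff.2 ⟨2, h4⟩)
  have hTM : T ⊆ (M : Set A) := fun t ht => (hMmem t).2 (hT t ht)
  intro z hz
  exact (hMmem z).1 (rdi_le d hMrad hMdiff hTM hz)

private lemma inter_le (d : Derivation ℚ A A) {I : Ideal A} (hrad : I.IsRadical)
    (hdiff : ∀ x ∈ I, d x ∈ I) {a b : A} (hab : a * b ∈ I) :
    rdi d (↑I ∪ {a}) ⊓ rdi d (↑I ∪ {b}) ≤ I := by
  intro x hx
  obtain ⟨hxa, hxb⟩ := Submodule.mem_inf.1 hx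
  have step1 : ∀ z ∈ rdi d (↑I ∪ {b}), a * z ∈ I := by
    refine key d hrad hdiff ?_
    rintro t (ht | rfl)
    · exact I.mul_mem_left _ ht
    · exact hab
  have step2 : ∀ w ∈ rdi d (↑I ∪ {a}), x * w ∈ I := by
    refine key d hrad hdiff ?_
    rintro t (ht | rfl)
    · exact I.mul_mem_left _ ht
    · rw [mul_comm]; exact step1 x hxb
  have hx2 : x ^ 2 ∈ I := by rw [pow_two]; exact step2 x hxa
  exact hrad (Ideal.mem_radical_iff.2 ⟨2, hx2⟩)

end Aux

/-- In a commutative differential ring `(A, d)` over `ℚ` in which every radical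
differential ideal is the smallest radical differential ideal containing a finite set
(Ritt–Noetherianity), every radical differential ideal `I ≠ A` is a finite intersection of
prime differential ideals. -/
theorem radical_differential_ideal_eq_finite_inter_of_primes
    (A : Type*) [CommRing A] [Algebra ℚ A] (d : Derivation ℚ A A)
    (hritt : ∀ I : Ideal A, I.IsRadical → (∀ x ∈ I, d x ∈ I) →
      ∃ S : Finset A,
        I = sInf {J : Ideal A | (J.IsRadical ∧ ∀ x ∈ J, d x ∈ J) ∧ (↑S : Set A) ⊆ (J : Set A)})
    (I : Ideal A) (hrad : I.IsRadical) (hdiff : ∀ x ∈ I, d x ∈ I) (hne : I ≠ ⊤) :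
    ∃ s : Finset (Ideal A),
      (∀ P ∈ s, P.IsPrime ∧ ∀ x ∈ P, d x ∈ P) ∧ I = s.inf id := by
  classical
  -- well-foundedness of ⊃ on radical differential ideals
  have wf : WellFounded ((· > ·) :
      {p : Ideal A // p.IsRadical ∧ ∀ x ∈ p, d x ∈ p} →
      {p : Ideal A // p.IsRadical ∧ ∀ x ∈ p, d x ∈ p} → Prop) := by
    refine (wellFoundedGT_iff_monotone_chain_condition.2 ?_).wf
    intro f
    set g : ℕ →o Ideal A := ⟨fun n => (f n).1, fun i j h => f.mono h⟩ with hg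
    set U : Ideal A := ⨆ n, g n with hU
    have hmem : ∀ x : A, x ∈ U ↔ ∃ n, x ∈ g n := fun x => Submodule.mem_iSup_of_chain g x
    have hUrad : U.IsRadical := by
      intro x hx
      obtain ⟨n, hn⟩ := Ideal.mem_radical_iff.1 hx
      obtain ⟨k, hk⟩ := (hmem _).1 hn
      exact (hmem x).2 ⟨k, (f k).2.1 (Ideal.mem_radical_iff.2 ⟨n, hk⟩)⟩
    have hUdiff : ∀ x ∈ U, d x ∈ U := by
      intro x hx
      obtain ⟨k, hk⟩ := (hmem x).1 hx
      exact (hmem _).2 ⟨k, (f k).2.2 x hk⟩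
    obtain ⟨S, hS⟩ := hritt U hUrad hUdiff
    have hSU : (↑S : Set A) ⊆ (U : Set A) := by
      rw [hS]; exact subset_rdi d _
    have hsel : ∀ s : {x // x ∈ S}, ∃ k, (s : A) ∈ g k := fun s => (hmem _).1 (hSU s.2)
    choose k hk using hsel
    refine ⟨S.attach.sup k, fun m hm => ?_⟩
    have hSN : (↑S : Set A) ⊆ (g (S.attach.sup k) : Set A) := by
      intro s hs
      exact g.mono (Finset.le_sup (Finset.mem_attach _ ⟨s, hs⟩)) (hk ⟨s, hs⟩)
    have hUle : U ≤ g (S.attach.sup k) := by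
      rw [hS]
      exact rdi_le d (f _).2.1 (f _).2.2 hSN
    have h1 : f (S.attach.sup k) ≤ f m := f.mono hm
    have h2 : (f m).1 ≤ (f (S.attach.sup k)).1 := le_trans (le_iSup g m) hUle
    exact le_antisymm h1 h2
  -- main induction
  have main : ∀ p : {p : Ideal A // p.IsRadical ∧ ∀ x ∈ p, d x ∈ p},
      (p : Ideal A) ≠ ⊤ → ∃ s : Finset (Ideal A),
        (∀ P ∈ s, P.IsPrime ∧ ∀ x ∈ P, d x ∈ P) ∧ (p : Ideal A) = s.inf id := by
    intro p
    refine wf.induction (C := fun q => (q : Ideal A) ≠ ⊤ → ∃ s : Finset (Ideal A),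
      (∀ P ∈ s, P.IsPrime ∧ ∀ x ∈ P, d x ∈ P) ∧ (q : Ideal A) = s.inf id) p ?_
    rintro ⟨J, hJrad, hJdiff⟩ ih hJne
    by_cases hp : J.IsPrime
    · refine ⟨{J}, ?_, by simp⟩
      intro P hP
      rw [Finset.mem_singleton] at hP
      subst hP
      exact ⟨hp, hJdiff⟩
    · -- J is not prime : find a, b
      rw [Ideal.isPrime_iff] at hp
      push_neg at hp
      obtain ⟨a, b, hab, ha, hb⟩ := hp hJne
      set Ia : Ideal A := rdi d (↑J ∪ {a}) with hIa
      set Ib : Ideal A := rdi d (↑J ∪ {b}) with hIb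
      have haIa : a ∈ Ia := subset_rdi d _ (Or.inr rfl)
      have hbIb : b ∈ Ib := subset_rdi d _ (Or.inr rfl)
      have hJIa : J ≤ Ia := fun x hx => subset_rdi d _ (Or.inl hx)
      have hJIb : J ≤ Ib := fun x hx => subset_rdi d _ (Or.inl hx)
      have hinter : Ia ⊓ Ib ≤ J := inter_le d hJrad hJdiff hab
      have hJeq : J = Ia ⊓ Ib := le_antisymm (le_inf hJIa hJIb) hinter
      have hIane : Ia ≠ ⊤ := by
        intro h
        exact hb (hinter (Submodule.mem_inf.2 ⟨h ▸ Submodule.mem_top, hbIb⟩))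
      have hIbne : Ib ≠ ⊤ := by
        intro h
        exact ha (hinter (Submodule.mem_inf.2 ⟨haIa, h ▸ Submodule.mem_top⟩))
      have hgtA : (⟨Ia, rdi_radical d _, rdi_diff d _⟩ :
          {p : Ideal A // p.IsRadical ∧ ∀ x ∈ p, d x ∈ p}) > ⟨J, hJrad, hJdiff⟩ := by
        rw [gt_iff_lt, ← Subtype.coe_lt_coe]
        exact lt_of_le_of_ne hJIa fun h => ha (by rw [show J = Ia from h]; exact haIa)
      have hgtB : (⟨Ib, rdi_radical d _, rdi_diff d _⟩ :
          {p : Ideal A // p.IsRadical ∧ ∀ x ∈ p, d x ∈ p}) > ⟨J, hJrad, hJdiff⟩ := by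
        rw [gt_iff_lt, ← Subtype.coe_lt_coe]
        exact lt_of_le_of_ne hJIb fun h => hb (by rw [show J = Ib from h]; exact hbIb)
      obtain ⟨sa, hsa, hsaeq⟩ := ih _ hgtA hIane
      obtain ⟨sb, hsb, hsbeq⟩ := ih _ hgtB hIbne
      refine ⟨sa ∪ sb, ?_, ?_⟩
      · intro P hP
        rcases Finset.mem_union.1 hP with h | h
        · exact hsa P h
        · exact hsb P h
      · rw [Finset.inf_union, ← hsaeq, ← hsbeq]
        exact hJeq
  exact main ⟨I, hrad, hdiff⟩ hne
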